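/- Under the same seven sum-to-one constraints on nonnegative p : Fin 13 → ℝ, if p(E1) = 1 then p(E8) ≤ 1/2. -/
import Mathlib


/-- Labels: 0=E1, 1=E2, 2=F2, 3=E3, 4=F3, 5=E4, 6=E5, 7=E6, 8=E7, 9=F, 10=F4, 11=F5, 12=E8. -/
theorem uncertainty_relation_certain
    (p : Fin 13 → ℝ)
    (hnn : ∀ i, 0 ≤ p i)
    (h1 : p 0 + p 1 + p 2 = 1)   -- (E1,E2,F2)
    (h2 : p 0 + p 3 + p 4 = 1)   -- (E1,E3,F3)
    (h3 : p 1 + p 5 + p 7 = 1)   -- (E2,E4,E6)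
    (h4 : p 3 + p 6 + p 8 = 1)   -- (E3,E5,E7)
    (h5 : p 7 + p 8 + p 9 = 1)   -- (E6,E7,F)
    (h6 : p 5 + p 12 + p 10 = 1) -- (E4,E8,F4)
    (h7 : p 6 + p 12 + p 11 = 1) -- (E5,E8,F5)
    (hE1 : p 0 = 1) : p 12 ≤ 1 / 2 := by
  nlinarith [hnn 1, hnn 2, hnn 3, hnn 4, hnn 5, hnn 6, hnn 7, hnn 8, hnn 9, hnn 10, hnn 11, hnn 12]
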